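/- arXiv:2406.16268 — 2 statements merged into one kernel-verified Lean document; each statement's English description precedes it below -/
import Mathlib

section
/- If C is a k-plex with |C| ≥ 2k - 1 vertices, then C is connected and has diameter at most 2; in particular, any two distinct non-adjacent vertices of C have a common neighbor in C. -/
open scoped Classical
open Finset

/-- A `k`-plex: every vertex of `C` has at least `|C| - k` neighbors inside `C`. -/
def IsKPlex {V : Type*} (G : SimpleGraph V) (k : ℕ) (C : Finset V) : Prop :=
  ∀ v ∈ C, C.card ≤ (C.filter (fun w => G.Adj v w)).card + k

/-- A `k`-plex with at least `2k - 1` vertices is connected and has diameter at most `2`;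
in particular any two distinct non-adjacent vertices have a common neighbor in `C`. -/
theorem kplex_bounded_diameter {V : Type*} (G : SimpleGraph V) (k : ℕ) (C : Finset V)
    (hk : 1 ≤ k) (h : IsKPlex G k C) (hcard : 2 * k ≤ C.card + 1) :
    (G.induce (C : Set V)).Connected ∧
    (∀ u v : (C : Set V), (G.induce (C : Set V)).dist u v ≤ 2) ∧
    (∀ u ∈ C, ∀ v ∈ C, u ≠ v → ¬ G.Adj u v → ∃ w ∈ C, G.Adj u w ∧ G.Adj v w) := by
  -- Common neighbor claim
  have key : ∀ u ∈ C, ∀ v ∈ C, u ≠ v → ¬ G.Adj u v → ∃ w ∈ C, G.Adj u w ∧ G.Adj v w := by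
    intro u hu v hv huv hadj
    set A := C.filter (fun w => G.Adj u w) with hA
    set B := C.filter (fun w => G.Adj v w) with hB
    have hAsub : A ⊆ (C.erase u).erase v := by
      intro w hw
      simp only [hA, mem_filter] at hw
      refine mem_erase.2 ⟨?_, mem_erase.2 ⟨?_, hw.1⟩⟩
      · rintro rfl; exact hadj hw.2
      · rintro rfl; exact G.irrefl hw.2
    have hBsub : B ⊆ (C.erase u).erase v := by
      intro w hw
      simp only [hB, mem_filter] at hw
      refine mem_erase.2 ⟨?_, mem_erase.2 ⟨?_, hw.1⟩⟩
      · rintro rfl; exact G.irrefl hw.2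
      · rintro rfl; exact hadj (G.adj_symm hw.2)
    have hcarde : ((C.erase u).erase v).card + 2 = C.card := by
      rw [card_erase_of_mem (mem_erase.2 ⟨huv.symm, hv⟩), card_erase_of_mem hu]
      have h1 : 1 ≤ C.card := card_pos.2 ⟨u, hu⟩
      have h2 : 2 ≤ C.card := by
        have := one_lt_card.2 ⟨u, hu, v, hv, huv⟩
        omega
      omega
    by_contra hcon
    push_neg at hcon
    have hdisj : Disjoint A B := by
      rw [Finset.disjoint_left]
      intro w hwA hwB
      simp only [hA, hB, mem_filter] at hwA hwB
      exact hcon w hwA.1 hwA.2 hwB.2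
    have hunion : A.card + B.card ≤ ((C.erase u).erase v).card := by
      rw [← card_union_of_disjoint hdisj]
      exact card_le_card (union_subset hAsub hBsub)
    have h1 := h u hu
    have h2 := h v hv
    rw [← hA] at h1
    rw [← hB] at h2
    omega
  -- distance ≤ 2 for subtype vertices
  have hreach : ∀ u v : (C : Set V), ∃ p : (G.induce (C : Set V)).Walk u v, p.length ≤ 2 := by
    intro u v
    by_cases heq : u = v
    · subst heq; exact ⟨SimpleGraph.Walk.nil, by simp⟩
    · by_cases hadj : G.Adj u v
      · exact ⟨SimpleGraph.Walk.cons (by exact hadj) SimpleGraph.Walk.nil, by exact Nat.le_succ 1⟩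
      · obtain ⟨w, hwC, hw1, hw2⟩ := key u u.2 v v.2 (fun hc => heq (Subtype.ext hc)) hadj
        refine ⟨SimpleGraph.Walk.cons (v := ⟨w, hwC⟩) (by exact hw1)
          (SimpleGraph.Walk.cons (by exact G.adj_symm hw2) SimpleGraph.Walk.nil), le_refl 2⟩
  have hconn : (G.induce (C : Set V)).Connected := by
    have hne : (C : Set V).Nonempty := by
      have : 0 < C.card := by omega
      obtain ⟨x, hx⟩ := card_pos.1 this
      exact ⟨x, hx⟩
    have : Nonempty ↑(C : Set V) := hne.to_subtype
    exact ⟨fun u v => (hreach u v).elim fun p _ => ⟨p⟩⟩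
  refine ⟨hconn, fun u v => ?_, key⟩
  obtain ⟨p, hp⟩ := hreach u v
  exact le_trans (SimpleGraph.dist_le p) hp
end

section
/- Let C be a k-plex with |C| ≥ 2k - 1 and let u, v be two distinct vertices of C. Then u and v have a common neighbor in C or are adjacent. More precisely, if u and v are not adjacent, then |N(u) ∩ N(v) ∩ C| ≥ |C| - 2k + 2 > 0. -/
open scoped Classical
open Finset

/-- In a `k`-plex with `|C| ≥ 2k - 1`, two distinct non-adjacent vertices have at least
`|C| - 2k + 2 > 0` common neighbors inside `C`. -/
theorem kplex_common_neighbor {V : Type*} (G : SimpleGraph V) (k : ℕ) (C : Finset V)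
    (h : IsKPlex G k C) (hcard : 2 * k ≤ C.card + 1)
    (u v : V) (hu : u ∈ C) (hv : v ∈ C) (huv : u ≠ v) (hadj : ¬ G.Adj u v) :
    C.card + 2 ≤ (C.filter (fun w => G.Adj u w ∧ G.Adj v w)).card + 2 * k ∧
    0 < (C.filter (fun w => G.Adj u w ∧ G.Adj v w)).card := by
  have hAB : C.filter (fun w => G.Adj u w ∧ G.Adj v w)
      = (C.filter (fun w => G.Adj u w)) ∩ (C.filter (fun w => G.Adj v w)) := by
    ext w
    simp only [Finset.mem_filter, Finset.mem_inter]
    tauto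
  have hu' := h u hu
  have hv' := h v hv
  have hsub : (C.filter (fun w => G.Adj u w)) ∪ (C.filter (fun w => G.Adj v w))
      ⊆ (C.erase u).erase v := by
    intro w hw
    rcases Finset.mem_union.mp hw with h1 | h1
    · rw [Finset.mem_filter] at h1
      refine Finset.mem_erase.mpr ⟨?_, Finset.mem_erase.mpr ⟨?_, h1.1⟩⟩
      · rintro rfl; exact hadj h1.2
      · rintro rfl; exact G.irrefl h1.2
    · rw [Finset.mem_filter] at h1
      refine Finset.mem_erase.mpr ⟨?_, Finset.mem_erase.mpr ⟨?_, h1.1⟩⟩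
      · rintro rfl; exact G.irrefl h1.2
      · rintro rfl; exact hadj (G.adj_symm h1.2)
  have hle : ((C.filter (fun w => G.Adj u w)) ∪ (C.filter (fun w => G.Adj v w))).card
      ≤ C.card - 2 := by
    calc _ ≤ ((C.erase u).erase v).card := Finset.card_le_card hsub
      _ = C.card - 1 - 1 := by
          rw [Finset.card_erase_of_mem (Finset.mem_erase.mpr ⟨huv.symm, hv⟩),
            Finset.card_erase_of_mem hu]
      _ = C.card - 2 := by omega
  have hC2 : 2 ≤ C.card := Finset.one_lt_card.mpr ⟨u, hu, v, hv, huv⟩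
  have hie := Finset.card_union_add_card_inter
    (C.filter (fun w => G.Adj u w)) (C.filter (fun w => G.Adj v w))
  rw [hAB]
  omega
end
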